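/- (Multigraded Hochster formula) For a simplicial complex K on [m], a field k, and any subset I ⊆ [m] viewed as a (0,1)-vector: Tor^{k[v₁,…,v_m]}_{i, 2I}(k[K], k) ≅ H̃^{|I|−i−1}(K_I; k), and Tor^{k[v₁,…,v_m]}_{i, 2a}(k[K], k) = 0 whenever a ∈ ℕ^m is not a (0,1)-vector. -/

import Mathlib

open Finset

attribute [local instance] Classical.propDecidable

/-- Quotient of a module by a submodule. -/
abbrev modQuot {k : Type} [Field k] {M : Type} [AddCommGroup M] [Module k M]
    (p : Submodule k M) : Type := M ⧸ p

variable (k : Type) [Field k] {m : ℕ}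

/-- The support of an exponent vector `a ∈ ℕ^m`. -/
def nsupp {m : ℕ} (a : Fin m → ℕ) : Finset (Fin m) :=
  Finset.univ.filter fun i => a i ≠ 0

/-- The characteristic `(0,1)`-vector of a subset `J ⊆ [m]`. -/
def chi {m : ℕ} (J : Finset (Fin m)) : Fin m → ℕ := fun i => if i ∈ J then 1 else 0

/-- The basis of the multidegree-`2b` part of homological degree `i` of the Koszul
complex `Λ[u₁,…,u_m] ⊗ k[K]`: monomials `u_J v^{b−χ_J}` with `|J| = i`, `χ_J ≤ b`,
and `v^{b−χ_J} ≠ 0` in the Stanley–Reisner ring `k[K]`, i.e. `supp (b−χ_J) ∈ K`. -/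
def KB (K : Set (Finset (Fin m))) (b : Fin m → ℕ) (i : ℕ) : Type :=
  {J : Finset (Fin m) // J.card = i ∧ (∀ j ∈ J, 1 ≤ b j) ∧
    nsupp (fun x => b x - chi J x) ∈ K}

/-- The multidegree-`2b`, homological degree-`i` component of the Koszul complex. -/
abbrev KCh (K : Set (Finset (Fin m))) (b : Fin m → ℕ) (i : ℕ) : Type := KB K b i → k

/-- The Koszul differential `d(u_J v^a) = ∑_{j∈J} ± u_{J∖j} v^{a+e_j}` in multidegree
`2b` (a summand is `0` in the Stanley–Reisner ring when `supp (b − χ_{J∖j}) ∉ K`). -/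
noncomputable def dK (K : Set (Finset (Fin m))) (b : Fin m → ℕ) (i : ℕ) :
    KCh k K b (i + 1) →ₗ[k] KCh k K b i :=
  LinearMap.pi fun J' =>
    ∑ j ∈ (Finset.univ \ J'.1).attach,
      if h : 1 ≤ b j.1 ∧ nsupp (fun x => b x - chi (insert j.1 J'.1) x) ∈ K then
        ((-1 : k) ^ (J'.1.filter fun y => y < j.1).card) •
          LinearMap.proj
            (⟨insert j.1 J'.1, by
              have hj : j.1 ∉ J'.1 := (Finset.mem_sdiff.mp j.2).2
              refine ⟨?_, ?_, h.2⟩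
              · rw [Finset.card_insert_of_notMem hj, J'.2.1]
              · intro x hx
                rcases Finset.mem_insert.mp hx with rfl | hx'
                · exact h.1
                · exact J'.2.2.1 x hx'⟩ : KB K b (i + 1))
      else 0

/-- The outgoing Koszul differential (zero in homological degree `0`). -/
noncomputable def dDownK (K : Set (Finset (Fin m))) (b : Fin m → ℕ) :
    ∀ i : ℕ, KCh k K b i →ₗ[k] KCh k K b (i - 1)
  | 0 => 0
  | (n + 1) => dK k K b n

/-- `Tor^{k[v₁,…,v_m]}_{i,2b}(k[K], k)`: the homology of the multidegree-`2b` part of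
the Koszul complex, in homological degree `i`. -/
abbrev TorMulti (K : Set (Finset (Fin m))) (b : Fin m → ℕ) (i : ℕ) : Type :=
  modQuot (Submodule.comap (LinearMap.ker (dDownK k K b i)).subtype
    (LinearMap.range (dK k K b i)))

/-- Basis of the (augmented) simplicial cochain complex of `L` in cohomological degree
`q`: the faces of `L` of cardinality `q + 1` (so `q = -1` corresponds to the empty
face, giving *reduced* cohomology). -/
def CB (L : Set (Finset (Fin m))) (q : ℤ) : Type :=
  {σ : Finset (Fin m) // σ ∈ L ∧ (σ.card : ℤ) = q + 1}

/-- Simplicial cochains with coefficients in `k`. -/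
abbrev CoCh (L : Set (Finset (Fin m))) (q : ℤ) : Type := CB L q → k

/-- The simplicial coboundary map `(δf)(τ) = ∑_{v∈τ} ± f(τ ∖ v)`. -/
noncomputable def deltaC (L : Set (Finset (Fin m))) (q : ℤ) :
    CoCh k L q →ₗ[k] CoCh k L (q + 1) :=
  LinearMap.pi fun τ =>
    ∑ v ∈ τ.1.attach,
      if h : τ.1.erase v.1 ∈ L then
        ((-1 : k) ^ (τ.1.filter fun y => y < v.1).card) •
          LinearMap.proj
            (⟨τ.1.erase v.1, h, by
              have h2 := τ.2.2
              have h4 : 1 ≤ τ.1.card := Finset.card_pos.mpr ⟨v.1, v.2⟩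
              rw [Finset.card_erase_of_mem v.2]
              omega⟩ : CB L q)
      else 0

/-- Transport of graded components along an equality of degrees. -/
noncomputable def gcastk {M : ℤ → Type} [∀ p, AddCommGroup (M p)]
    [∀ p, Module k (M p)] {p q : ℤ} (h : p = q) : M p →ₗ[k] M q := by
  subst h; exact LinearMap.id

/-- The reduced simplicial cohomology `H̃^q(L; k)`, computed from the augmented
cochain complex (`H̃^{-1}` of the empty complex `{∅}` is `k`). -/
abbrev HredC (L : Set (Finset (Fin m))) (q : ℤ) : Type :=
  modQuot (Submodule.comap (LinearMap.ker (deltaC k L q)).subtype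
    (LinearMap.range ((gcastk k (M := CoCh k L) (show q - 1 + 1 = q by ring)) ∘ₗ
      deltaC k L (q - 1))))

/-! ### Auxiliary lemmas -/


lemma mem_nsupp {a : Fin m → ℕ} {y : Fin m} : y ∈ nsupp a ↔ a y ≠ 0 := by
  simp [nsupp]

lemma gcastk_apply {L : Set (Finset (Fin m))} {p q : ℤ} (h : p = q) (g : CoCh k L p)
    (τ : CB L q) :
    gcastk k (M := CoCh k L) h g τ = g ⟨τ.1, by rw [h]; exact τ.2⟩ := by
  subst h; rfl

lemma gcastk_eq_zero_iff {L : Set (Finset (Fin m))} {p q : ℤ} (h : p = q)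
    (g : CoCh k L p) :
    gcastk k (M := CoCh k L) h g = 0 ↔ g = 0 := by
  subst h; exact Iff.rfl

noncomputable def dTerm {K : Set (Finset (Fin m))} {a : Fin m → ℕ} {i : ℕ}
    (g : KCh k K a (i + 1)) (J : KB K a i) (j : Fin m) : k :=
  if h : j ∉ J.1 ∧ 1 ≤ a j ∧ nsupp (fun x => a x - chi (insert j J.1) x) ∈ K then
    (-1 : k) ^ ((J.1.filter fun y => y < j).card) *
      g ⟨insert j J.1, by
        refine ⟨?_, ?_, h.2.2⟩
        · rw [Finset.card_insert_of_notMem h.1, J.2.1]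
        · intro y hy
          rcases Finset.mem_insert.mp hy with rfl | hy'
          · exact h.2.1
          · exact J.2.2.1 y hy'⟩
  else 0

lemma dK_apply {K : Set (Finset (Fin m))} {a : Fin m → ℕ} {i : ℕ}
    (g : KCh k K a (i + 1)) (J : KB K a i) :
    dK k K a i g J = ∑ j ∈ Finset.univ, dTerm k g J j := by
  have h1 : dK k K a i g J = ∑ j ∈ (Finset.univ \ J.1).attach, dTerm k g J j.1 := by
    simp only [dK, LinearMap.pi_apply, LinearMap.sum_apply]
    refine Finset.sum_congr rfl fun j _ => ?_
    have hj : j.1 ∉ J.1 := (Finset.mem_sdiff.mp j.2).2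
    by_cases h : 1 ≤ a j.1 ∧ nsupp (fun x => a x - chi (insert j.1 J.1) x) ∈ K
    · rw [dif_pos h, dTerm, dif_pos ⟨hj, h⟩]
      rfl
    · rw [dif_neg h, dTerm, dif_neg (by tauto)]
      rfl
  rw [h1, Finset.sum_attach (Finset.univ \ J.1) (dTerm k g J)]
  refine Finset.sum_subset (Finset.subset_univ _) fun j _ hj => ?_
  rw [Finset.mem_sdiff] at hj
  rw [dTerm, dif_neg (by tauto)]

noncomputable def cTerm {L : Set (Finset (Fin m))} {q : ℤ}
    (g : CoCh k L q) (τ : CB L (q + 1)) (v : Fin m) : k :=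
  if h : v ∈ τ.1 ∧ τ.1.erase v ∈ L then
    (-1 : k) ^ ((τ.1.filter fun y => y < v).card) *
      g ⟨τ.1.erase v, h.2, by
        have h2 := τ.2.2
        have h4 : 1 ≤ τ.1.card := Finset.card_pos.mpr ⟨v, h.1⟩
        rw [Finset.card_erase_of_mem h.1]
        omega⟩
  else 0

lemma deltaC_apply {L : Set (Finset (Fin m))} {q : ℤ}
    (g : CoCh k L q) (τ : CB L (q + 1)) :
    deltaC k L q g τ = ∑ v ∈ Finset.univ, cTerm k g τ v := by
  have h1 : deltaC k L q g τ = ∑ v ∈ τ.1.attach, cTerm k g τ v.1 := by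
    simp only [deltaC, LinearMap.pi_apply, LinearMap.sum_apply]
    refine Finset.sum_congr rfl fun v _ => ?_
    by_cases h : τ.1.erase v.1 ∈ L
    · rw [dif_pos h, cTerm, dif_pos ⟨v.2, h⟩]
      rfl
    · rw [dif_neg h, cTerm, dif_neg (by tauto)]
      rfl
  rw [h1, Finset.sum_attach τ.1 (cTerm k g τ)]
  refine Finset.sum_subset (Finset.subset_univ _) fun v _ hv => ?_
  rw [cTerm, dif_neg (by tauto)]

lemma quot_subsingleton {M : Type} [AddCommGroup M] [Module k M] {p : Submodule k M}
    (h : ∀ x : M, x ∈ p) : Subsingleton (modQuot p) := by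
  have : p = ⊤ := eq_top_iff.mpr fun x _ => h x
  exact Submodule.Quotient.subsingleton_iff.mpr this

lemma homology_equiv {A B C A' B' C' : Type}
    [AddCommGroup A] [Module k A] [AddCommGroup B] [Module k B]
    [AddCommGroup C] [Module k C] [AddCommGroup A'] [Module k A']
    [AddCommGroup B'] [Module k B'] [AddCommGroup C'] [Module k C']
    (f : B →ₗ[k] A) (g : A →ₗ[k] C) (f' : B' →ₗ[k] A') (g' : A' →ₗ[k] C')
    (eA : A ≃ₗ[k] A')
    (hg : ∀ x : A, g x = 0 ↔ g' (eA x) = 0)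
    (hf : Submodule.map (eA : A →ₗ[k] A') (LinearMap.range f) = LinearMap.range f') :
    Nonempty (modQuot (Submodule.comap (LinearMap.ker g).subtype (LinearMap.range f)) ≃ₗ[k]
      modQuot (Submodule.comap (LinearMap.ker g').subtype (LinearMap.range f'))) := by
  have hker : (LinearMap.ker g).map (eA : A →ₗ[k] A') = LinearMap.ker g' := by
    ext x'
    simp only [Submodule.mem_map, LinearMap.mem_ker]
    constructor
    · rintro ⟨x, hx, rfl⟩
      exact (hg x).1 hx
    · intro h
      exact ⟨eA.symm x', (hg _).2 (by simpa using h), by simp⟩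
  let E : (LinearMap.ker g) ≃ₗ[k] (LinearMap.ker g') :=
    (eA.submoduleMap (LinearMap.ker g)).trans (LinearEquiv.ofEq _ _ hker)
  refine ⟨Submodule.Quotient.equiv _ _ E ?_⟩
  ext x'
  simp only [Submodule.mem_map, Submodule.mem_comap, Submodule.coe_subtype]
  constructor
  · rintro ⟨y, hy, rfl⟩
    rw [← hf]
    exact ⟨(y : A), hy, rfl⟩
  · intro hx'
    rw [← hf] at hx'
    obtain ⟨a, ha, haeq⟩ := hx'
    have hga : g a = 0 := by
      refine (hg a).2 ?_
      have h2 : (x' : A') ∈ LinearMap.ker g' := x'.2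
      rw [← haeq] at h2
      simpa using h2
    refine ⟨⟨a, hga⟩, ha, ?_⟩
    apply Subtype.ext
    exact haeq

section Part2

lemma sign_cancel {F : k} {a1 a2 b1 b2 : ℕ} (h : a1 + a2 = b1 + b2 + 1) :
    (-1 : k) ^ a1 * ((-1 : k) ^ a2 * F) + (-1 : k) ^ b1 * ((-1 : k) ^ b2 * F) = 0 := by
  have h2 : (-1 : k) ^ (a1 + a2) = -(-1 : k) ^ (b1 + b2) := by
    rw [h, pow_succ]; ring
  rw [← mul_assoc, ← pow_add, ← mul_assoc, ← pow_add, h2]; ring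

lemma sign_sq {F : k} {a : ℕ} : (-1 : k) ^ a * ((-1 : k) ^ a * F) = F := by
  rw [← mul_assoc, ← pow_add, ← two_mul, pow_mul]; norm_num

lemma card_filter_insert {s : Finset (Fin m)} {b : Fin m} (hb : b ∉ s) (p : Fin m → Prop)
    [DecidablePred p] :
    ((insert b s).filter p).card = (s.filter p).card + if p b then 1 else 0 := by
  rw [Finset.filter_insert]
  split_ifs with h
  · rw [Finset.card_insert_of_notMem fun hc => hb (Finset.mem_of_mem_filter b hc)]
  · rw [add_zero]

lemma nsupp_congr {a : Fin m → ℕ} {x : Fin m} (hax : 2 ≤ a x) {S T : Finset (Fin m)}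
    (h : ∀ y, y ≠ x → (y ∈ S ↔ y ∈ T)) :
    nsupp (fun y => a y - chi S y) = nsupp (fun y => a y - chi T y) := by
  ext y
  by_cases hy : y = x
  · subst hy
    simp only [mem_nsupp, chi]
    split_ifs <;> omega
  · simp only [mem_nsupp, chi, h y hy]

noncomputable def sHom (K : Set (Finset (Fin m))) (a : Fin m → ℕ) (x : Fin m) (i : ℕ)
    (f : KCh k K a i) : KCh k K a (i + 1) := fun J =>
  if h : x ∈ J.1 ∧ nsupp (fun y => a y - chi (J.1.erase x) y) ∈ K then
    (-1 : k) ^ (((J.1.erase x)).filter fun y => y < x).card *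
      f ⟨J.1.erase x, by
        refine ⟨?_, fun j hj => J.2.2.1 j (Finset.mem_of_mem_erase hj), h.2⟩
        rw [Finset.card_erase_of_mem h.1, J.2.1]
        omega⟩
  else 0

lemma sHom_apply_of_mem {K : Set (Finset (Fin m))} {a : Fin m → ℕ} {x : Fin m} {i : ℕ}
    (f : KCh k K a i) (J : KB K a (i + 1)) (hx : x ∈ J.1) (v : Finset (Fin m))
    (pv : v.card = i ∧ (∀ j ∈ v, 1 ≤ a j) ∧ nsupp (fun y => a y - chi v y) ∈ K)
    (hval : v = J.1.erase x) :
    sHom k K a x i f J = (-1 : k) ^ ((v.filter fun y => y < x).card) * f ⟨v, pv⟩ := by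
  subst hval
  rw [sHom, dif_pos ⟨hx, pv.2.2⟩]

lemma sHom_apply_of_not_mem {K : Set (Finset (Fin m))} {a : Fin m → ℕ} {x : Fin m} {i : ℕ}
    (f : KCh k K a i) (J : KB K a (i + 1)) (hx : x ∉ J.1) :
    sHom k K a x i f J = 0 := by
  rw [sHom, dif_neg fun hc => hx hc.1]

lemma dTerm_pos {K : Set (Finset (Fin m))} {a : Fin m → ℕ} {i : ℕ}
    (g : KCh k K a (i + 1)) (J : KB K a i) (j : Fin m)
    (h1 : j ∉ J.1) (h2 : 1 ≤ a j) (v : Finset (Fin m))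
    (pv : v.card = i + 1 ∧ (∀ y ∈ v, 1 ≤ a y) ∧ nsupp (fun y => a y - chi v y) ∈ K)
    (hval : v = insert j J.1) :
    dTerm k g J j = (-1 : k) ^ ((J.1.filter fun y => y < j).card) * g ⟨v, pv⟩ := by
  subst hval
  rw [dTerm, dif_pos ⟨h1, h2, pv.2.2⟩]

lemma dTerm_neg {K : Set (Finset (Fin m))} {a : Fin m → ℕ} {i : ℕ}
    (g : KCh k K a (i + 1)) (J : KB K a i) (j : Fin m)
    (h : ¬(j ∉ J.1 ∧ 1 ≤ a j ∧ nsupp (fun x => a x - chi (insert j J.1) x) ∈ K)) :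
    dTerm k g J j = 0 := dif_neg h

lemma dK_sHom_of_not_mem {K : Set (Finset (Fin m))} {a : Fin m → ℕ} {x : Fin m}
    (hax : 2 ≤ a x) {i : ℕ} (f : KCh k K a i) (J : KB K a i) (hx : x ∉ J.1) :
    dK k K a i (sHom k K a x i f) J = f J := by
  rw [dK_apply, Finset.sum_eq_single x]
  · have e1 : nsupp (fun y => a y - chi (insert x J.1) y)
        = nsupp (fun y => a y - chi J.1 y) :=
      nsupp_congr hax fun y hy => by simp [Finset.mem_insert, hy]
    have mv : (insert x J.1).card = i + 1 ∧ (∀ y ∈ insert x J.1, 1 ≤ a y) ∧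
        nsupp (fun y => a y - chi (insert x J.1) y) ∈ K := by
      refine ⟨by rw [Finset.card_insert_of_notMem hx, J.2.1], fun y hy => ?_,
        by rw [e1]; exact J.2.2.2⟩
      rcases Finset.mem_insert.mp hy with rfl | hy'
      · omega
      · exact J.2.2.1 y hy'
    rw [dTerm_pos k (sHom k K a x i f) J x hx (by omega) _ mv rfl]
    have e2 : (insert x J.1).erase x = J.1 := Finset.erase_insert hx
    rw [sHom_apply_of_mem k f ⟨insert x J.1, mv⟩ (Finset.mem_insert_self x J.1) J.1
      ⟨J.2.1, J.2.2.1, J.2.2.2⟩ e2.symm]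
    have eJ : (⟨J.1, ⟨J.2.1, J.2.2.1, J.2.2.2⟩⟩ : KB K a i) = J := Subtype.ext rfl
    rw [eJ]
    exact sign_sq k
  · intro j _ hjx
    by_cases h : j ∉ J.1 ∧ 1 ≤ a j ∧ nsupp (fun y => a y - chi (insert j J.1) y) ∈ K
    · have mv : (insert j J.1).card = i + 1 ∧ (∀ y ∈ insert j J.1, 1 ≤ a y) ∧
          nsupp (fun y => a y - chi (insert j J.1) y) ∈ K := by
        refine ⟨by rw [Finset.card_insert_of_notMem h.1, J.2.1], fun y hy => ?_, h.2.2⟩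
        rcases Finset.mem_insert.mp hy with rfl | hy'
        · exact h.2.1
        · exact J.2.2.1 y hy'
      rw [dTerm_pos k (sHom k K a x i f) J j h.1 h.2.1 _ mv rfl]
      rw [sHom_apply_of_not_mem k f ⟨insert j J.1, mv⟩ (by
        intro hc
        rcases Finset.mem_insert.mp hc with h' | h'
        · exact hjx h'.symm
        · exact hx h')]
      rw [mul_zero]
    · exact dTerm_neg k _ J j h
  · intro h
    exact absurd (Finset.mem_univ x) h

lemma hom_identity {K : Set (Finset (Fin m))} {a : Fin m → ℕ} {x : Fin m}
    (hax : 2 ≤ a x) {i : ℕ} (f : KCh k K a (i + 1)) (J : KB K a (i + 1)) (hx : x ∈ J.1) :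
    dK k K a (i + 1) (sHom k K a x (i + 1) f) J + sHom k K a x i (dK k K a i f) J = f J := by
  have e0 : nsupp (fun y => a y - chi (J.1.erase x) y) = nsupp (fun y => a y - chi J.1 y) :=
    nsupp_congr hax fun y hy => by simp [Finset.mem_erase, hy]
  have mJx : (J.1.erase x).card = i ∧ (∀ j ∈ J.1.erase x, 1 ≤ a j) ∧
      nsupp (fun y => a y - chi (J.1.erase x) y) ∈ K := by
    refine ⟨?_, fun j hj => J.2.2.1 j (Finset.mem_of_mem_erase hj),
      by rw [e0]; exact J.2.2.2⟩
    rw [Finset.card_erase_of_mem hx, J.2.1]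
    omega
  rw [sHom_apply_of_mem k _ J hx _ mJx rfl, dK_apply,
    dK_apply k f (⟨J.1.erase x, mJx⟩ : KB K a i), Finset.mul_sum,
    ← Finset.sum_add_distrib, Finset.sum_eq_single x]
  · -- the main term
    rw [dTerm_neg k _ J x fun hc => hc.1 hx, zero_add]
    have e1 : insert x (J.1.erase x) = J.1 := Finset.insert_erase hx
    have mv : (insert x (J.1.erase x)).card = i + 1 ∧
        (∀ y ∈ insert x (J.1.erase x), 1 ≤ a y) ∧
        nsupp (fun y => a y - chi (insert x (J.1.erase x)) y) ∈ K := by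
      rw [e1]; exact ⟨J.2.1, J.2.2.1, J.2.2.2⟩
    rw [dTerm_pos k f ⟨J.1.erase x, mJx⟩ x (Finset.notMem_erase x J.1) (by omega) _ mv rfl]
    have eJ : (⟨insert x (J.1.erase x), mv⟩ : KB K a (i + 1)) = J := Subtype.ext e1
    rw [eJ]
    dsimp only
    exact sign_sq k
  · -- off terms cancel in pairs
    intro j _ hjx
    have hsup : nsupp (fun y => a y - chi (insert j ((J.1).erase x)) y)
        = nsupp (fun y => a y - chi (insert j J.1) y) :=
      nsupp_congr hax fun y hy => by simp [Finset.mem_insert, Finset.mem_erase, hy]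
    by_cases h1 : j ∉ J.1 ∧ 1 ≤ a j ∧ nsupp (fun y => a y - chi (insert j J.1) y) ∈ K
    · have hja : j ∉ J.1.erase x := fun hc => h1.1 (Finset.mem_of_mem_erase hc)
      have mvj : (insert j (J.1.erase x)).card = i + 1 ∧
          (∀ y ∈ insert j (J.1.erase x), 1 ≤ a y) ∧
          nsupp (fun y => a y - chi (insert j (J.1.erase x)) y) ∈ K := by
        refine ⟨?_, fun y hy => ?_, by rw [hsup]; exact h1.2.2⟩
        · rw [Finset.card_insert_of_notMem hja, mJx.1]
        · rcases Finset.mem_insert.mp hy with rfl | hy'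
          · exact h1.2.1
          · exact mJx.2.1 y hy'
      have mvJ : (insert j J.1).card = i + 1 + 1 ∧ (∀ y ∈ insert j J.1, 1 ≤ a y) ∧
          nsupp (fun y => a y - chi (insert j J.1) y) ∈ K := by
        refine ⟨by rw [Finset.card_insert_of_notMem h1.1, J.2.1], fun y hy => ?_, h1.2.2⟩
        rcases Finset.mem_insert.mp hy with rfl | hy'
        · exact h1.2.1
        · exact J.2.2.1 y hy'
      have e2 : (insert j J.1).erase x = insert j (J.1.erase x) :=
        Finset.erase_insert_of_ne hjx
      rw [dTerm_pos k (sHom k K a x (i + 1) f) J j h1.1 h1.2.1 _ mvJ rfl]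
      rw [sHom_apply_of_mem k f ⟨insert j J.1, mvJ⟩ (Finset.mem_insert_of_mem hx) _ mvj
        e2.symm]
      rw [dTerm_pos k f ⟨J.1.erase x, mJx⟩ j hja h1.2.1 _ mvj rfl]
      dsimp only
      refine sign_cancel k ?_
      have c1 : ((insert j (J.1.erase x)).filter fun y => y < x).card
          = ((J.1.erase x).filter fun y => y < x).card + if j < x then 1 else 0 :=
        card_filter_insert hja _
      have c2 : (J.1.filter fun y => y < j).card
          = ((J.1.erase x).filter fun y => y < j).card + if x < j then 1 else 0 := by
        conv_lhs => rw [← Finset.insert_erase hx]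
        exact card_filter_insert (Finset.notMem_erase x J.1) _
      rcases lt_or_gt_of_ne hjx with h | h
      · rw [c1, c2, if_pos h, if_neg (asymm h)]
        omega
      · rw [c1, c2, if_neg (asymm h), if_pos h]
        omega
    · have h2 : ¬(j ∉ (⟨J.1.erase x, mJx⟩ : KB K a i).1 ∧ 1 ≤ a j ∧
          nsupp (fun y => a y - chi (insert j (⟨J.1.erase x, mJx⟩ : KB K a i).1) y) ∈ K) := by
        intro hc
        exact h1 ⟨fun hj => hc.1 (Finset.mem_erase.mpr ⟨hjx, hj⟩), hc.2.1,
          by rw [← hsup]; exact hc.2.2⟩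
      rw [dTerm_neg k _ J j h1, dTerm_neg k f ⟨J.1.erase x, mJx⟩ j h2, mul_zero, add_zero]
  · intro h
    exact absurd (Finset.mem_univ x) h

end Part2

lemma sHom_apply_zero {K : Set (Finset (Fin m))} {a : Fin m → ℕ} {x : Fin m} {i : ℕ}
    {J : KB K a (i + 1)} : sHom k K a x i (0 : KCh k K a i) J = 0 := by
  rw [sHom]
  split_ifs
  · exact mul_zero _
  · rfl

lemma torMulti_subsingleton {K : Set (Finset (Fin m))} (a : Fin m → ℕ) (i : ℕ)
    (h : ¬ ∀ x, a x ≤ 1) : Subsingleton (TorMulti k K a i) := by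
  push_neg at h
  obtain ⟨x, hx⟩ := h
  have hax : 2 ≤ a x := hx
  apply quot_subsingleton
  intro y
  rw [Submodule.mem_comap]
  have hgoal : (y : KCh k K a i) ∈ LinearMap.range (dK k K a i) := by
    cases i with
    | zero =>
      refine ⟨sHom k K a x 0 (y : KCh k K a 0), funext fun J => ?_⟩
      have hxJ : x ∉ J.1 := by
        have hJ : J.1 = ∅ := Finset.card_eq_zero.mp J.2.1
        simp [hJ]
      exact dK_sHom_of_not_mem k hax _ J hxJ
    | succ n =>
      have hker : dK k K a n (y : KCh k K a (n + 1)) = 0 := y.2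
      refine ⟨sHom k K a x (n + 1) (y : KCh k K a (n + 1)), funext fun J => ?_⟩
      by_cases hxJ : x ∈ J.1
      · have h2 := hom_identity k hax (y : KCh k K a (n + 1)) J hxJ
        rw [hker] at h2
        rw [sHom_apply_zero] at h2
        simpa using h2
      · exact dK_sHom_of_not_mem k hax _ J hxJ
  exact hgoal

section Part1

lemma nsupp_chi_sub_chi (I J : Finset (Fin m)) :
    nsupp (fun x => chi I x - chi J x) = I \ J := by
  ext y
  simp only [mem_nsupp, chi, Finset.mem_sdiff]
  by_cases h1 : y ∈ I <;> by_cases h2 : y ∈ J <;> simp [h1, h2]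

lemma sdiff_sdiff_of_subset {I J : Finset (Fin m)} (h : J ⊆ I) : I \ (I \ J) = J := by
  rw [Finset.sdiff_sdiff_self_left, Finset.inter_eq_right.mpr h]

noncomputable def sgn (I τ : Finset (Fin m)) : k :=
  (-1 : k) ^ (∑ y ∈ τ, (I.filter fun z => z < y).card)

lemma KB_subset_I {K : Set (Finset (Fin m))} {I : Finset (Fin m)} {i : ℕ}
    (J : KB K (chi I) i) : J.1 ⊆ I := by
  intro j hj
  have h := J.2.2.1 j hj
  by_cases hI : j ∈ I
  · exact hI
  · simp [chi, hI] at h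

lemma KB_sdiff_mem {K : Set (Finset (Fin m))} {I : Finset (Fin m)} {i : ℕ}
    (J : KB K (chi I) i) : I \ J.1 ∈ K := by
  have h := J.2.2.2
  rwa [nsupp_chi_sub_chi] at h

lemma KB_card_le {K : Set (Finset (Fin m))} {I : Finset (Fin m)} {i : ℕ}
    (J : KB K (chi I) i) : i ≤ I.card := by
  rw [← J.2.1]
  exact Finset.card_le_card (KB_subset_I J)

/-- The `KB`-membership data for `I \ σ`, `σ` a face of the full subcomplex. -/
lemma KBmem (K : Set (Finset (Fin m))) (I : Finset (Fin m)) (i : ℕ) (p : ℤ)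
    (hp : p = (I.card : ℤ) - i - 1) (σ : CB {σ ∈ K | σ ⊆ I} p) :
    (I \ σ.1).card = i ∧ (∀ j ∈ I \ σ.1, 1 ≤ chi I j) ∧
      nsupp (fun x => chi I x - chi (I \ σ.1) x) ∈ K := by
  obtain ⟨hσK, hσI⟩ := Set.mem_sep_iff.mp σ.2.1
  have hcard := σ.2.2
  have hle : σ.1.card ≤ I.card := Finset.card_le_card hσI
  refine ⟨?_, fun j hj => ?_, ?_⟩
  · rw [Finset.card_sdiff_of_subset hσI]
    omega
  · simp [chi, (Finset.mem_sdiff.mp hj).1]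
  · rw [nsupp_chi_sub_chi, sdiff_sdiff_of_subset hσI]
    exact hσK

/-- The `CB`-membership data for `I \ J`, `J` a Koszul basis monomial. -/
lemma CBmem (K : Set (Finset (Fin m))) (I : Finset (Fin m)) (i : ℕ) (p : ℤ)
    (hp : p = (I.card : ℤ) - i - 1) (J : KB K (chi I) i) :
    I \ J.1 ∈ {σ ∈ K | σ ⊆ I} ∧ (((I \ J.1).card : ℤ)) = p + 1 := by
  refine ⟨Set.mem_sep_iff.mpr ⟨KB_sdiff_mem J, Finset.sdiff_subset⟩, ?_⟩
  have h1 := KB_card_le J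
  rw [Finset.card_sdiff_of_subset (KB_subset_I J), J.2.1, hp]
  omega

/-- The sign-twisted reindexing isomorphism between the multidegree-`χ_I` Koszul
cochain groups and the simplicial cochain groups of the full subcomplex `K_I`. -/
noncomputable def EIf (K : Set (Finset (Fin m))) (I : Finset (Fin m)) (i : ℕ) (p : ℤ)
    (hp : p = (I.card : ℤ) - i - 1) :
    KCh k K (chi I) i ≃ₗ[k] CoCh k {σ ∈ K | σ ⊆ I} p where
  toFun f σ := sgn k I σ.1 * f ⟨I \ σ.1, KBmem K I i p hp σ⟩
  map_add' f g := by
    funext σ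
    simp only [Pi.add_apply]
    exact mul_add _ _ _
  map_smul' c f := by
    funext σ
    simp only [Pi.smul_apply, smul_eq_mul, RingHom.id_apply]
    change sgn k I σ.1 * (c * f _) = _
    ring
  invFun g J := sgn k I (I \ J.1) * g ⟨I \ J.1, CBmem K I i p hp J⟩
  left_inv f := by
    funext J
    dsimp only
    have eJ : (⟨I \ (I \ J.1), KBmem K I i p hp ⟨I \ J.1, CBmem K I i p hp J⟩⟩ :
        KB K (chi I) i) = J := Subtype.ext (sdiff_sdiff_of_subset (KB_subset_I J))
    rw [eJ]
    exact sign_sq k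
  right_inv g := by
    funext σ
    dsimp only
    have hσI : σ.1 ⊆ I := (Set.mem_sep_iff.mp σ.2.1).2
    have e1 : I \ (I \ σ.1) = σ.1 := sdiff_sdiff_of_subset hσI
    have eσ : (⟨I \ (⟨I \ σ.1, KBmem K I i p hp σ⟩ : KB K (chi I) i).1,
        CBmem K I i p hp ⟨I \ σ.1, KBmem K I i p hp σ⟩⟩ :
        CB {σ ∈ K | σ ⊆ I} p) = σ := Subtype.ext e1
    rw [eσ]
    rw [show I \ (⟨I \ σ.1, KBmem K I i p hp σ⟩ : KB K (chi I) i).1 = σ.1 from e1]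
    exact sign_sq k

lemma EIf_apply (K : Set (Finset (Fin m))) (I : Finset (Fin m)) (i : ℕ) (p : ℤ)
    (hp : p = (I.card : ℤ) - i - 1) (f : KCh k K (chi I) i)
    (σ : CB {σ ∈ K | σ ⊆ I} p) :
    EIf k K I i p hp f σ = sgn k I σ.1 * f ⟨I \ σ.1, KBmem K I i p hp σ⟩ := rfl

lemma cTerm_pos {L : Set (Finset (Fin m))} {q : ℤ}
    (g : CoCh k L q) (τ : CB L (q + 1)) (v : Fin m) (hv : v ∈ τ.1)
    (w : Finset (Fin m)) (pw : w ∈ L ∧ ((w.card : ℤ)) = q + 1) (hval : w = τ.1.erase v) :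
    cTerm k g τ v = (-1 : k) ^ ((τ.1.filter fun y => y < v).card) * g ⟨w, pw⟩ := by
  subst hval
  rw [cTerm, dif_pos ⟨hv, pw.1⟩]

lemma cTerm_neg {L : Set (Finset (Fin m))} {q : ℤ}
    (g : CoCh k L q) (τ : CB L (q + 1)) (v : Fin m)
    (h : ¬(v ∈ τ.1 ∧ τ.1.erase v ∈ L)) : cTerm k g τ v = 0 := dif_neg h

lemma master_square (K : Set (Finset (Fin m))) (I : Finset (Fin m)) (i : ℕ) (p q : ℤ)
    (hq : q = (I.card : ℤ) - i - 1) (hp : p = (I.card : ℤ) - (i + 1 : ℕ) - 1)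
    (hpq : p + 1 = q) (f : KCh k K (chi I) (i + 1)) :
    EIf k K I i q hq (dK k K (chi I) i f)
      = gcastk k (M := CoCh k {σ ∈ K | σ ⊆ I}) hpq
          (deltaC k {σ ∈ K | σ ⊆ I} p (EIf k K I (i + 1) p hp f)) := by
  funext τ
  rw [gcastk_apply, deltaC_apply k (EIf k K I (i + 1) p hp f)
    (⟨τ.1, by rw [hpq]; exact τ.2⟩ : CB {σ ∈ K | σ ⊆ I} (p + 1)), EIf_apply,
    dK_apply k f (⟨I \ τ.1, KBmem K I i q hq τ⟩ : KB K (chi I) i), Finset.mul_sum]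
  refine Finset.sum_congr rfl fun j _ => ?_
  have hτ : τ.1 ∈ K ∧ τ.1 ⊆ I := Set.mem_sep_iff.mp τ.2.1
  by_cases hjτ : j ∈ τ.1
  · -- matching nonzero terms
    have hjI : j ∈ I := hτ.2 hjτ
    have e1 : I \ (τ.1.erase j) = insert j (I \ τ.1) := by
      ext y
      simp only [Finset.mem_sdiff, Finset.mem_erase, Finset.mem_insert]
      constructor
      · rintro ⟨hyI, hy⟩
        push_neg at hy
        by_cases hyj : y = j
        · exact Or.inl hyj
        · exact Or.inr ⟨hyI, hy hyj⟩
      · rintro (rfl | ⟨hyI, hyτ⟩)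
        · exact ⟨hjI, fun hc => hc.1 rfl⟩
        · exact ⟨hyI, fun hc => hyτ hc.2⟩
    have hsubI : τ.1.erase j ⊆ I := fun y hy => hτ.2 (Finset.mem_of_mem_erase hy)
    have e2 : I \ insert j (I \ τ.1) = τ.1.erase j := by
      rw [← e1, sdiff_sdiff_of_subset hsubI]
    by_cases hK2 : τ.1.erase j ∈ K
    · have hIc : (I \ τ.1).card = i := (KBmem K I i q hq τ).1
      have hjd : j ∉ I \ τ.1 := fun hc => (Finset.mem_sdiff.mp hc).2 hjτ
      have mw : (insert j (I \ τ.1)).card = i + 1 ∧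
          (∀ y ∈ insert j (I \ τ.1), 1 ≤ chi I y) ∧
          nsupp (fun y => chi I y - chi (insert j (I \ τ.1)) y) ∈ K := by
        refine ⟨by rw [Finset.card_insert_of_notMem hjd, hIc], fun y hy => ?_, ?_⟩
        · have hyI : y ∈ I := by
            rcases Finset.mem_insert.mp hy with rfl | hy'
            · exact hjI
            · exact (Finset.mem_sdiff.mp hy').1
          simp [chi, hyI]
        · rw [nsupp_chi_sub_chi, e2]
          exact hK2
      have pw : τ.1.erase j ∈ {σ ∈ K | σ ⊆ I} ∧ (((τ.1.erase j).card : ℤ)) = p + 1 := by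
        refine ⟨Set.mem_sep_iff.mpr ⟨hK2, hsubI⟩, ?_⟩
        have hτc := τ.2.2
        have h1 : 1 ≤ τ.1.card := Finset.card_pos.mpr ⟨j, hjτ⟩
        rw [Finset.card_erase_of_mem hjτ]
        omega
      rw [dTerm_pos k f ⟨I \ τ.1, KBmem K I i q hq τ⟩ j hjd (by simp [chi, hjI]) _ mw rfl]
      rw [cTerm_pos k _ (⟨τ.1, by rw [hpq]; exact τ.2⟩ : CB {σ ∈ K | σ ⊆ I} (p + 1)) j hjτ _ pw rfl]
      rw [EIf_apply k K I (i + 1) p hp f (⟨τ.1.erase j, pw⟩ : CB {σ ∈ K | σ ⊆ I} p)]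
      have eArg : (⟨I \ (τ.1.erase j), KBmem K I (i + 1) p hp ⟨τ.1.erase j, pw⟩⟩ :
          KB K (chi I) (i + 1)) = ⟨insert j (I \ τ.1), mw⟩ := Subtype.ext e1
      rw [eArg]
      dsimp only
      have hsplit : (I.filter fun y => y < j).card
          = ((I \ τ.1).filter fun y => y < j).card + (τ.1.filter fun y => y < j).card := by
        conv_lhs => rw [← Finset.sdiff_union_of_subset hτ.2]
        rw [Finset.filter_union,
          Finset.card_union_of_disjoint (Finset.disjoint_filter_filter Finset.sdiff_disjoint)]
      have hsgn : sgn k I τ.1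
          = sgn k I (τ.1.erase j) * (-1 : k) ^ ((I.filter fun y => y < j).card) := by
        simp only [sgn]
        rw [← pow_add]
        exact congrArg _ (Finset.sum_erase_add τ.1 _ hjτ).symm
      rw [hsgn, hsplit, pow_add]
      have hsq : (-1 : k) ^ (((I \ τ.1).filter fun y => y < j).card)
          * (-1 : k) ^ (((I \ τ.1).filter fun y => y < j).card) = 1 := by
        rw [← pow_add, ← two_mul, pow_mul]
        norm_num
      linear_combination ((-1 : k) ^ ((τ.1.filter fun y => y < j).card)
        * sgn k I (τ.1.erase j) * f ⟨insert j (I \ τ.1), mw⟩) * hsq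
    · -- both terms vanish
      rw [dTerm_neg k f ⟨I \ τ.1, KBmem K I i q hq τ⟩ j (by
          intro hc
          apply hK2
          have h3 := hc.2.2
          rwa [nsupp_chi_sub_chi, e2] at h3), mul_zero]
      rw [cTerm_neg k _ (⟨τ.1, by rw [hpq]; exact τ.2⟩ : CB {σ ∈ K | σ ⊆ I} (p + 1)) j (fun hc => hK2 (Set.mem_sep_iff.mp hc.2).1)]
  · -- both terms vanish
    rw [cTerm_neg k _ (⟨τ.1, by rw [hpq]; exact τ.2⟩ : CB {σ ∈ K | σ ⊆ I} (p + 1)) j (fun hc => hjτ hc.1)]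
    rw [dTerm_neg k f ⟨I \ τ.1, KBmem K I i q hq τ⟩ j (by
        intro hc
        have hjI : j ∈ I := by
          by_cases h : j ∈ I
          · exact h
          · simp [chi, h] at hc
        exact hc.1 (Finset.mem_sdiff.mpr ⟨hjI, hjτ⟩)), mul_zero]

end Part1

/-- **Theorem 5.3.1 (multigraded Hochster formula).** For a simplicial complex `K` on
`[m]`, a field `k`, and any `I ⊆ [m]` viewed as a `(0,1)`-vector,
`Tor^{k[v₁,…,v_m]}_{i,2I}(k[K],k) ≅ H̃^{|I|−i−1}(K_I; k)`, and
`Tor^{k[v₁,…,v_m]}_{i,2a}(k[K],k) = 0` whenever `a ∈ ℕ^m` is not a `(0,1)`-vector. -/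
theorem multigraded_hochster_formula {m : ℕ} (K : Set (Finset (Fin m)))
    (hKempty : ∅ ∈ K) (hKdc : ∀ σ ∈ K, ∀ τ ⊆ σ, τ ∈ K) :
    (∀ (I : Finset (Fin m)) (i : ℕ),
      Nonempty (TorMulti k K (fun x => if x ∈ I then 1 else 0) i ≃ₗ[k]
        HredC k {σ ∈ K | σ ⊆ I} ((I.card : ℤ) - i - 1))) ∧
    ∀ (a : Fin m → ℕ) (i : ℕ), (¬ ∀ x, a x ≤ 1) → Subsingleton (TorMulti k K a i) := by
  constructor
  · intro I i
    have hIb : (fun x => if x ∈ I then 1 else 0) = chi I := rfl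
    rw [hIb]
    set L : Set (Finset (Fin m)) := {σ ∈ K | σ ⊆ I} with hL
    set q : ℤ := (I.card : ℤ) - i - 1 with hqdef
    have hq2 : q - 1 = (I.card : ℤ) - (i + 1 : ℕ) - 1 := by
      rw [hqdef]; push_cast; ring
    refine homology_equiv k (dK k K (chi I) i) (dDownK k K (chi I) i)
      ((gcastk k (M := CoCh k L) (show q - 1 + 1 = q by ring)) ∘ₗ deltaC k L (q - 1))
      (deltaC k L q) (EIf k K I i q hqdef) ?_ ?_
    · -- kernels correspond
      intro x
      cases i with
      | zero =>
        simp only [dDownK, LinearMap.zero_apply]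
        constructor
        · intro _
          funext τ
          exfalso
          have h1 := τ.2.2
          have h2 : τ.1.card ≤ I.card :=
            Finset.card_le_card (Set.mem_sep_iff.mp τ.2.1).2
          omega
        · intro _
          trivial
      | succ n =>
        have hQ : q + 1 = (I.card : ℤ) - (n : ℕ) - 1 := by
          rw [hqdef]; push_cast; ring
        have key := master_square k K I n q (q + 1) hQ hqdef rfl x
        simp only [dDownK]
        constructor
        · intro h
          have h' : dK k K (chi I) n x = 0 := h
          have h2 : EIf k K I n (q + 1) hQ (dK k K (chi I) n x) = 0 := by
            rw [h']
            exact map_zero _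
          rw [key] at h2
          exact (gcastk_eq_zero_iff k rfl _).mp h2
        · intro h
          have h2 : EIf k K I n (q + 1) hQ (dK k K (chi I) n x) = 0 := by
            rw [key]
            exact (gcastk_eq_zero_iff k rfl _).mpr h
          exact (LinearEquiv.map_eq_zero_iff _).mp h2
    · -- ranges correspond
      have key : ∀ f : KCh k K (chi I) (i + 1),
          EIf k K I i q hqdef (dK k K (chi I) i f)
            = ((gcastk k (M := CoCh k L) (show q - 1 + 1 = q by ring)) ∘ₗ
                deltaC k L (q - 1)) (EIf k K I (i + 1) (q - 1) hq2 f) := fun f => by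
        rw [LinearMap.comp_apply]
        exact master_square k K I i (q - 1) q hqdef hq2 (by ring) f
      apply le_antisymm
      · rintro y hy
        obtain ⟨z, hz, rfl⟩ := Submodule.mem_map.mp hy
        obtain ⟨f, rfl⟩ := hz
        rw [LinearMap.mem_range]
        refine ⟨EIf k K I (i + 1) (q - 1) hq2 f, ?_⟩
        rw [← key f]
        simp
      · rintro y hy
        obtain ⟨g, rfl⟩ := hy
        rw [Submodule.mem_map]
        refine ⟨dK k K (chi I) i ((EIf k K I (i + 1) (q - 1) hq2).symm g),
          LinearMap.mem_range_self _ _, ?_⟩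
        have h3 := key ((EIf k K I (i + 1) (q - 1) hq2).symm g)
        rw [LinearEquiv.apply_symm_apply] at h3
        rw [← h3]
        simp
  · intro a i h
    exact torMulti_subsingleton k a i h
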